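/- Let P₁, P₂ ⊆ ℝ² be convex polygons with P₁ = conv(C₁ ∩ S) and P₂ = conv(C₂ ∩ S) for a set S ⊆ ℝ² and axis-aligned closed squares C₁, C₂. If P₁ ∩ P₂ ≠ ∅, then C₁ ∩ C₂ ∩ S ≠ ∅. -/

import Mathlib

open Set

lemma convex_box (c : EuclideanSpace ℝ (Fin 2)) (n : ℝ) :
    Convex ℝ {x : EuclideanSpace ℝ (Fin 2) | ∀ j, x j ∈ Icc (c j) (c j + n)} := by
  intro x hx y hy a b ha hb hab j
  have hj := (convex_Icc (c j) (c j + n)) (hx j) (hy j) ha hb hab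
  simpa [PiLp.add_apply, PiLp.smul_apply, smul_eq_mul] using hj

def projL (k : Fin 2) : EuclideanSpace ℝ (Fin 2) →ₗ[ℝ] ℝ where
  toFun x := x k
  map_add' _ _ := rfl
  map_smul' _ _ := rfl

def linL (α β : ℝ) : EuclideanSpace ℝ (Fin 2) →ₗ[ℝ] ℝ where
  toFun x := α * x 0 + β * x 1
  map_add' x y := by simp [PiLp.add_apply]; ring
  map_smul' c x := by simp [PiLp.smul_apply, smul_eq_mul]; ring

lemma exists_ge_of_mem_convexHull {A : Set (EuclideanSpace ℝ (Fin 2))}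
    {x : EuclideanSpace ℝ (Fin 2)} (f : EuclideanSpace ℝ (Fin 2) →ₗ[ℝ] ℝ)
    (hx : x ∈ convexHull ℝ A) : ∃ a ∈ A, f x ≤ f a := by
  by_contra hc
  push_neg at hc
  have hsub : convexHull ℝ A ⊆ {y | f y < f x} :=
    convexHull_min (fun a ha => hc a ha) (convex_halfSpace_lt f.isLinear (f x))
  exact lt_irrefl (f x) (hsub hx)

lemma mem_convexHull_face {A : Set (EuclideanSpace ℝ (Fin 2))}
    {x : EuclideanSpace ℝ (Fin 2)} (f : EuclideanSpace ℝ (Fin 2) →ₗ[ℝ] ℝ) {t : ℝ}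
    (hA : ∀ a ∈ A, f a ≤ t) (hx : x ∈ convexHull ℝ A) (hfx : f x = t) :
    x ∈ convexHull ℝ (A ∩ {y | f y = t}) := by
  rw [convexHull_eq] at hx
  obtain ⟨ι, s, w, z, hw0, hw1, hz, hcm⟩ := hx
  have hxsum : x = ∑ i ∈ s, w i • z i := by
    rw [← hcm, Finset.centerMass_eq_of_sum_1 _ _ hw1]
  have hfx' : f x = ∑ i ∈ s, w i * f (z i) := by
    rw [hxsum, map_sum]
    simp [smul_eq_mul]
  have hfsum : ∑ i ∈ s, w i * (t - f (z i)) = 0 := by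
    have : ∑ i ∈ s, w i * (t - f (z i))
        = (∑ i ∈ s, w i) * t - ∑ i ∈ s, w i * f (z i) := by
      rw [Finset.sum_mul, ← Finset.sum_sub_distrib]
      congr 1; ext i; ring
    rw [this, hw1, ← hfx', hfx]; ring
  have hkey : ∀ i ∈ s, w i ≠ 0 → f (z i) = t := by
    intro i hi hwi
    have h0 := (Finset.sum_eq_zero_iff_of_nonneg
      (fun i hi => mul_nonneg (hw0 i hi) (sub_nonneg.2 (hA _ (hz i hi))))).1 hfsum i hi
    rcases mul_eq_zero.1 h0 with hh | hh
    · exact absurd hh hwi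
    · linarith [sub_eq_zero.1 hh]
  rw [← Finset.centerMass_filter_ne_zero (w := w)] at hcm
  rw [← hcm]
  refine Finset.centerMass_mem_convexHull _
    (fun i hi => hw0 i (Finset.mem_filter.1 hi).1) ?_ ?_
  · have heq : ∑ i ∈ Finset.filter (fun i => w i ≠ 0) s, w i = ∑ i ∈ s, w i :=
      Finset.sum_filter_ne_zero s
    rw [heq, hw1]; norm_num
  · intro i hi
    obtain ⟨hi1, hi2⟩ := Finset.mem_filter.1 hi
    exact ⟨hz i hi1, hkey i hi1 hi2⟩

lemma key15 (n : ℝ) (hn : 0 ≤ n) (c₁ c₂ : EuclideanSpace ℝ (Fin 2))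
    (S C₁ C₂ : Set (EuclideanSpace ℝ (Fin 2)))
    (hC₁ : C₁ = {x | ∀ j, x j ∈ Set.Icc (c₁ j) (c₁ j + n)})
    (hC₂ : C₂ = {x | ∀ j, x j ∈ Set.Icc (c₂ j) (c₂ j + n)})
    (h0 : c₁ 0 ≤ c₂ 0) (h1 : c₁ 1 ≤ c₂ 1)
    (h : ((convexHull ℝ (C₁ ∩ S)) ∩ (convexHull ℝ (C₂ ∩ S))).Nonempty) :
    (C₁ ∩ C₂ ∩ S).Nonempty := by
  obtain ⟨x, hx₁, hx₂⟩ := h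
  have hconv₁ : Convex ℝ C₁ := hC₁ ▸ convex_box c₁ n
  have hconv₂ : Convex ℝ C₂ := hC₂ ▸ convex_box c₂ n
  have hxC₁ : x ∈ C₁ := convexHull_min inter_subset_left hconv₁ hx₁
  have hxC₂ : x ∈ C₂ := convexHull_min inter_subset_left hconv₂ hx₂
  rw [hC₁] at hxC₁; rw [hC₂] at hxC₂
  have hmem₁ : ∀ a ∈ C₁ ∩ S, ∀ j, c₁ j ≤ a j ∧ a j ≤ c₁ j + n := by
    intro a ha j
    have ha' := ha.1; rw [hC₁] at ha'
    exact ⟨(ha' j).1, (ha' j).2⟩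
  have hmem₂ : ∀ b ∈ C₂ ∩ S, ∀ j, c₂ j ≤ b j ∧ b j ≤ c₂ j + n := by
    intro b hb j
    have hb' := hb.1; rw [hC₂] at hb'
    exact ⟨(hb' j).1, (hb' j).2⟩
  have hov0 : c₂ 0 ≤ c₁ 0 + n := le_trans (hxC₂ 0).1 (hxC₁ 0).2
  have hov1 : c₂ 1 ≤ c₁ 1 + n := le_trans (hxC₂ 1).1 (hxC₁ 1).2
  rcases eq_or_lt_of_le hov0 with hd0 | hd0
  · -- degenerate in coordinate 0 : c₂ 0 = c₁ 0 + n
    have hx0 : x 0 = c₂ 0 := le_antisymm (by rw [hd0]; exact (hxC₁ 0).2) (hxC₂ 0).1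
    have hface : x ∈ convexHull ℝ ((C₁ ∩ S) ∩ {y | projL 0 y = c₂ 0}) := by
      refine mem_convexHull_face (projL 0) ?_ hx₁ hx0
      intro a ha
      have := (hmem₁ a ha 0).2
      show a 0 ≤ c₂ 0
      rw [hd0]; exact this
    obtain ⟨a, ⟨haA, ha0⟩, hge⟩ := exists_ge_of_mem_convexHull (projL 1) hface
    have ha0' : a 0 = c₂ 0 := ha0
    have hge' : x 1 ≤ a 1 := hge
    have h1a := hmem₁ a haA 1
    refine ⟨a, ⟨⟨haA.1, ?_⟩, haA.2⟩⟩
    rw [hC₂]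
    simp only [mem_setOf_eq, Fin.forall_fin_two, mem_Icc]
    exact ⟨⟨le_of_eq ha0'.symm, by linarith [ha0'.le]⟩,
      ⟨by linarith [(hxC₂ 1).1], by linarith [h1a.2]⟩⟩
  rcases eq_or_lt_of_le hov1 with hd1 | hd1
  · -- degenerate in coordinate 1 : c₂ 1 = c₁ 1 + n
    have hx1 : x 1 = c₂ 1 := le_antisymm (by rw [hd1]; exact (hxC₁ 1).2) (hxC₂ 1).1
    have hface : x ∈ convexHull ℝ ((C₁ ∩ S) ∩ {y | projL 1 y = c₂ 1}) := by
      refine mem_convexHull_face (projL 1) ?_ hx₁ hx1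
      intro a ha
      have := (hmem₁ a ha 1).2
      show a 1 ≤ c₂ 1
      rw [hd1]; exact this
    obtain ⟨a, ⟨haA, ha1⟩, hge⟩ := exists_ge_of_mem_convexHull (projL 0) hface
    have ha1' : a 1 = c₂ 1 := ha1
    have hge' : x 0 ≤ a 0 := hge
    have h0a := hmem₁ a haA 0
    refine ⟨a, ⟨⟨haA.1, ?_⟩, haA.2⟩⟩
    rw [hC₂]
    simp only [mem_setOf_eq, Fin.forall_fin_two, mem_Icc]
    exact ⟨⟨by linarith [(hxC₂ 0).1], by linarith [h0a.2]⟩,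
      ⟨le_of_eq ha1'.symm, by linarith [ha1'.le]⟩⟩
  -- strict case: separation
  by_contra hS
  have hdisj : ∀ p, p ∈ C₁ → p ∈ C₂ → p ∉ S := fun p hp1 hp2 hps => hS ⟨p, ⟨hp1, hp2⟩, hps⟩
  have hAlt : ∀ a ∈ C₁ ∩ S, a 0 < c₂ 0 ∨ a 1 < c₂ 1 := by
    intro a ha
    by_contra hcon
    push_neg at hcon
    refine hdisj a ha.1 ?_ ha.2
    rw [hC₂]
    simp only [mem_setOf_eq, Fin.forall_fin_two, mem_Icc]
    have h0a := hmem₁ a ha 0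
    have h1a := hmem₁ a ha 1
    exact ⟨⟨hcon.1, by linarith [h0a.2]⟩, ⟨hcon.2, by linarith [h1a.2]⟩⟩
  have hBgt : ∀ b ∈ C₂ ∩ S, c₁ 0 + n < b 0 ∨ c₁ 1 + n < b 1 := by
    intro b hb
    by_contra hcon
    push_neg at hcon
    refine hdisj b ?_ hb.1 hb.2
    rw [hC₁]
    simp only [mem_setOf_eq, Fin.forall_fin_two, mem_Icc]
    have h0b := hmem₂ b hb 0
    have h1b := hmem₂ b hb 1
    exact ⟨⟨by linarith [h0b.1], hcon.1⟩, ⟨by linarith [h1b.1], hcon.2⟩⟩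
  set α : ℝ := c₁ 1 + n - c₂ 1 with hα
  set β : ℝ := c₁ 0 + n - c₂ 0 with hβ
  have hαpos : 0 < α := by rw [hα]; linarith
  have hβpos : 0 < β := by rw [hβ]; linarith
  set t : ℝ := α * c₂ 0 + β * (c₁ 1 + n) with ht
  have hid : α * (c₁ 0 + n) + β * c₂ 1 = t := by rw [ht, hα, hβ]; ring
  have hfa : ∀ a ∈ C₁ ∩ S, a ∈ {y : EuclideanSpace ℝ (Fin 2) | linL α β y < t} := by
    intro a ha
    have h0a := hmem₁ a ha 0
    have h1a := hmem₁ a ha 1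
    show α * a 0 + β * a 1 < t
    rcases hAlt a ha with hlt | hlt
    · have e1 : α * a 0 < α * c₂ 0 := mul_lt_mul_of_pos_left hlt hαpos
      have e2 : β * a 1 ≤ β * (c₁ 1 + n) := mul_le_mul_of_nonneg_left h1a.2 hβpos.le
      rw [ht]; linarith
    · have e1 : α * a 0 ≤ α * (c₁ 0 + n) := mul_le_mul_of_nonneg_left h0a.2 hαpos.le
      have e2 : β * a 1 < β * c₂ 1 := mul_lt_mul_of_pos_left hlt hβpos
      linarith
  have hfb : ∀ b ∈ C₂ ∩ S, b ∈ {y : EuclideanSpace ℝ (Fin 2) | t < linL α β y} := by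
    intro b hb
    have h0b := hmem₂ b hb 0
    have h1b := hmem₂ b hb 1
    show t < α * b 0 + β * b 1
    rcases hBgt b hb with hlt | hlt
    · have e1 : α * (c₁ 0 + n) < α * b 0 := mul_lt_mul_of_pos_left hlt hαpos
      have e2 : β * c₂ 1 ≤ β * b 1 := mul_le_mul_of_nonneg_left h1b.1 hβpos.le
      linarith
    · have e1 : α * c₂ 0 ≤ α * b 0 := mul_le_mul_of_nonneg_left h0b.1 hαpos.le
      have e2 : β * (c₁ 1 + n) < β * b 1 := mul_lt_mul_of_pos_left hlt hβpos
      rw [ht]; linarith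
  have hlt : x ∈ {y : EuclideanSpace ℝ (Fin 2) | linL α β y < t} :=
    convexHull_min hfa (convex_halfSpace_lt (linL α β).isLinear t) hx₁
  have hgt : x ∈ {y : EuclideanSpace ℝ (Fin 2) | t < linL α β y} :=
    convexHull_min hfb (convex_halfSpace_gt (linL α β).isLinear t) hx₂
  simp only [mem_setOf_eq] at hlt hgt
  linarith

def negSnd : EuclideanSpace ℝ (Fin 2) →ₗ[ℝ] EuclideanSpace ℝ (Fin 2) where
  toFun x := WithLp.toLp 2 (fun j => if j = 1 then -(x j) else x j)
  map_add' x y := by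
    ext j
    by_cases h : j = 1 <;> simp [h, PiLp.add_apply] <;> ring
  map_smul' c x := by
    ext j
    by_cases h : j = 1 <;> simp [h, PiLp.smul_apply, smul_eq_mul] <;> ring

lemma negSnd_apply (x : EuclideanSpace ℝ (Fin 2)) (j : Fin 2) :
    negSnd x j = if j = 1 then -(x j) else x j := rfl

lemma negSnd_invol (x : EuclideanSpace ℝ (Fin 2)) : negSnd (negSnd x) = x := by
  ext j
  by_cases h : j = 1 <;> simp [negSnd_apply, h]

lemma negSnd_image (A : Set (EuclideanSpace ℝ (Fin 2))) :
    negSnd '' A = negSnd ⁻¹' A := by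
  ext y
  constructor
  · rintro ⟨x, hx, rfl⟩; simpa [negSnd_invol] using hx
  · intro hy; exact ⟨negSnd y, hy, negSnd_invol y⟩

lemma key15' (n : ℝ) (hn : 0 ≤ n) (c₁ c₂ : EuclideanSpace ℝ (Fin 2))
    (S C₁ C₂ : Set (EuclideanSpace ℝ (Fin 2)))
    (hC₁ : C₁ = {x | ∀ j, x j ∈ Set.Icc (c₁ j) (c₁ j + n)})
    (hC₂ : C₂ = {x | ∀ j, x j ∈ Set.Icc (c₂ j) (c₂ j + n)})
    (h0 : c₁ 0 ≤ c₂ 0)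
    (h : ((convexHull ℝ (C₁ ∩ S)) ∩ (convexHull ℝ (C₂ ∩ S))).Nonempty) :
    (C₁ ∩ C₂ ∩ S).Nonempty := by
  rcases le_total (c₁ 1) (c₂ 1) with h1 | h1
  · exact key15 n hn c₁ c₂ S C₁ C₂ hC₁ hC₂ h0 h1 h
  · have hinj : Function.Injective negSnd := fun a b hab => by
      rw [← negSnd_invol a, hab, negSnd_invol]
    set c₁' : EuclideanSpace ℝ (Fin 2) := WithLp.toLp 2 (fun j => if j = 1 then -(c₁ 1) - n else c₁ j) with hc₁'
    set c₂' : EuclideanSpace ℝ (Fin 2) := WithLp.toLp 2 (fun j => if j = 1 then -(c₂ 1) - n else c₂ j) with hc₂'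
    have hc₁'0 : c₁' 0 = c₁ 0 := by rw [hc₁']; norm_num
    have hc₁'1 : c₁' 1 = -(c₁ 1) - n := by rw [hc₁']; norm_num
    have hc₂'0 : c₂' 0 = c₂ 0 := by rw [hc₂']; norm_num
    have hc₂'1 : c₂' 1 = -(c₂ 1) - n := by rw [hc₂']; norm_num
    have hC₁' : negSnd '' C₁ = {x | ∀ j, x j ∈ Set.Icc (c₁' j) (c₁' j + n)} := by
      rw [negSnd_image, hC₁]
      ext y
      simp only [mem_preimage, mem_setOf_eq, Fin.forall_fin_two, mem_Icc,
        negSnd_apply, hc₁'0, hc₁'1]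
      norm_num
      intro u1 u2
      constructor <;> rintro ⟨v1, v2⟩ <;> constructor <;> linarith
    have hC₂' : negSnd '' C₂ = {x | ∀ j, x j ∈ Set.Icc (c₂' j) (c₂' j + n)} := by
      rw [negSnd_image, hC₂]
      ext y
      simp only [mem_preimage, mem_setOf_eq, Fin.forall_fin_two, mem_Icc,
        negSnd_apply, hc₂'0, hc₂'1]
      norm_num
      intro u1 u2
      constructor <;> rintro ⟨v1, v2⟩ <;> constructor <;> linarith
    have h0' : c₁' 0 ≤ c₂' 0 := by rw [hc₁'0, hc₂'0]; exact h0
    have h1' : c₁' 1 ≤ c₂' 1 := by rw [hc₁'1, hc₂'1]; linarith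
    obtain ⟨x, hx₁, hx₂⟩ := h
    have h' : ((convexHull ℝ ((negSnd '' C₁) ∩ (negSnd '' S))) ∩
        (convexHull ℝ ((negSnd '' C₂) ∩ (negSnd '' S)))).Nonempty := by
      refine ⟨negSnd x, ?_, ?_⟩
      · rw [← Set.image_inter hinj, ← LinearMap.image_convexHull]
        exact mem_image_of_mem _ hx₁
      · rw [← Set.image_inter hinj, ← LinearMap.image_convexHull]
        exact mem_image_of_mem _ hx₂
    obtain ⟨p, ⟨hp1, hp2⟩, hp3⟩ := key15 n hn c₁' c₂' (negSnd '' S)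
      (negSnd '' C₁) (negSnd '' C₂) hC₁' hC₂' h0' h1' h'
    rw [negSnd_image] at hp1 hp2 hp3
    exact ⟨negSnd p, ⟨hp1, hp2⟩, hp3⟩

/-- If the convex hulls of `C₁ ∩ S` and `C₂ ∩ S` intersect, where `C₁, C₂` are
axis-aligned closed squares of the same side length in the plane, then
`C₁ ∩ C₂ ∩ S` is nonempty. -/
theorem stmt15 (n : ℝ) (hn : 0 ≤ n) (c₁ c₂ : EuclideanSpace ℝ (Fin 2))
    (S : Set (EuclideanSpace ℝ (Fin 2)))
    (C₁ C₂ : Set (EuclideanSpace ℝ (Fin 2)))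
    (hC₁ : C₁ = {x | ∀ j, x j ∈ Set.Icc (c₁ j) (c₁ j + n)})
    (hC₂ : C₂ = {x | ∀ j, x j ∈ Set.Icc (c₂ j) (c₂ j + n)})
    (h : ((convexHull ℝ (C₁ ∩ S)) ∩ (convexHull ℝ (C₂ ∩ S))).Nonempty) :
    (C₁ ∩ C₂ ∩ S).Nonempty := by
  rcases le_total (c₁ 0) (c₂ 0) with h0 | h0
  · exact key15' n hn c₁ c₂ S C₁ C₂ hC₁ hC₂ h0 h
  · obtain ⟨x, hx₁, hx₂⟩ := h
    obtain ⟨p, ⟨hp2, hp1⟩, hp3⟩ :=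
      key15' n hn c₂ c₁ S C₂ C₁ hC₂ hC₁ h0 ⟨x, hx₂, hx₁⟩
    exact ⟨p, ⟨hp1, hp2⟩, hp3⟩
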